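/- Let N ≥ 1, let λ_1,…,λ_N be pairwise distinct positive reals, c_1,…,c_N positive reals, and (δ^{(n)})_{n≥0} a sequence of nonzero reals with δ^{(n)} > −min_j λ_j for all n. Define moments μ_i^{(s,n)} := Σ_{j=1}^N c_j λ_j^{i+s} Π_{ℓ=0}^{n−1} (λ_j + δ^{(ℓ)}), Hankel determinants τ_0^{(s,n)} := 1, τ_i^{(s,n)} := det(μ_{j+k}^{(s,n)})_{j,k=0}^{i−1}, and Q_i^{(n)} := τ_{i−1}^{(−n,n)} τ_i^{(−n+1,n)}/(τ_i^{(−n,n)} τ_{i−1}^{(−n+1,n)}), Q̄_i^{(n)} := τ_{i−1}^{(−n,n)} τ_i^{(−n,n+1)}/(τ_i^{(−n,n)} τ_{i−1}^{(−n,n+1)}), E_i^{(n)} := τ_{i+1}^{(−n,n)} τ_{i−1}^{(−n+1,n)}/(τ_i^{(−n,n)} τ_i^{(−n+1,n)}). Define p_i^{(n)} := (Q̄_i^{(n)}/Q_i^{(n)} − 1)/δ^{(n)} and x_i^{(n)} := log( τ_i^{(−n,n)} τ_{i−1}^{(−n,n+1)} / (τ_{i−1}^{(−n+1,n)} τ_{i−1}^{(−n+1,n+1)})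 ). Then for every n ∈ ℕ: (a) p_i^{(n)} = τ_i^{(−n,n)} τ_{i−1}^{(−n+1,n+1)} / (τ_{i−1}^{(−n,n+1)} τ_i^{(−n+1,n)}) for i = 1,…,N; (b) e^{x_{i+1}^{(n)} − x_i^{(n)}} = p_i^{(n)} E_i^{(n)} / (p_{i+1}^{(n)} Q_{i+1}^{(n)}) for i = 1,…,N−1. -/

import Mathlib

open Finset

/-- Moments μ_i^{(s,n)} := Σ_{j=1}^N c_j λ_j^{i+s} Π_{ℓ=0}^{n−1}(λ_j + δ^{(ℓ)}). -/
noncomputable def mom (N : ℕ) (lam c : ℕ → ℝ) (δ : ℕ → ℝ) (i : ℕ) (s : ℤ) (n : ℕ) : ℝ :=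
  ∑ j ∈ Finset.Icc 1 N, c j * lam j ^ ((i : ℤ) + s) * ∏ l ∈ Finset.range n, (lam j + δ l)

/-- Hankel determinants τ_i^{(s,n)}. -/
noncomputable def tauH (N : ℕ) (lam c : ℕ → ℝ) (δ : ℕ → ℝ) (i : ℕ) (s : ℤ) (n : ℕ) : ℝ :=
  Matrix.det (Matrix.of fun j k : Fin i => mom N lam c δ (j.1 + k.1) s n)

/-- Q_i^{(n)} := τ_{i−1}^{(−n,n)} τ_i^{(−n+1,n)}/(τ_i^{(−n,n)} τ_{i−1}^{(−n+1,n)}). -/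
noncomputable def Qn (N : ℕ) (lam c : ℕ → ℝ) (δ : ℕ → ℝ) (i n : ℕ) : ℝ :=
  tauH N lam c δ (i - 1) (-(n : ℤ)) n * tauH N lam c δ i (-(n : ℤ) + 1) n /
    (tauH N lam c δ i (-(n : ℤ)) n * tauH N lam c δ (i - 1) (-(n : ℤ) + 1) n)

/-- Q̄_i^{(n)} := τ_{i−1}^{(−n,n)} τ_i^{(−n,n+1)}/(τ_i^{(−n,n)} τ_{i−1}^{(−n,n+1)}). -/
noncomputable def Qbn (N : ℕ) (lam c : ℕ → ℝ) (δ : ℕ → ℝ) (i n : ℕ) : ℝ :=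
  tauH N lam c δ (i - 1) (-(n : ℤ)) n * tauH N lam c δ i (-(n : ℤ)) (n + 1) /
    (tauH N lam c δ i (-(n : ℤ)) n * tauH N lam c δ (i - 1) (-(n : ℤ)) (n + 1))

/-- E_i^{(n)} := τ_{i+1}^{(−n,n)} τ_{i−1}^{(−n+1,n)}/(τ_i^{(−n,n)} τ_i^{(−n+1,n)}). -/
noncomputable def En (N : ℕ) (lam c : ℕ → ℝ) (δ : ℕ → ℝ) (i n : ℕ) : ℝ :=
  tauH N lam c δ (i + 1) (-(n : ℤ)) n * tauH N lam c δ (i - 1) (-(n : ℤ) + 1) n /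
    (tauH N lam c δ i (-(n : ℤ)) n * tauH N lam c δ i (-(n : ℤ) + 1) n)

/-- p_i^{(n)} := (Q̄_i^{(n)}/Q_i^{(n)} − 1)/δ^{(n)}. -/
noncomputable def pn (N : ℕ) (lam c : ℕ → ℝ) (δ : ℕ → ℝ) (i n : ℕ) : ℝ :=
  (Qbn N lam c δ i n / Qn N lam c δ i n - 1) / δ n

/-- x_i^{(n)} := log( τ_i^{(−n,n)} τ_{i−1}^{(−n,n+1)} / (τ_{i−1}^{(−n+1,n)} τ_{i−1}^{(−n+1,n+1)}) ). -/
noncomputable def xn (N : ℕ) (lam c : ℕ → ℝ) (δ : ℕ → ℝ) (i n : ℕ) : ℝ :=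
  Real.log (tauH N lam c δ i (-(n : ℤ)) n * tauH N lam c δ (i - 1) (-(n : ℤ)) (n + 1) /
    (tauH N lam c δ (i - 1) (-(n : ℤ) + 1) n * tauH N lam c δ (i - 1) (-(n : ℤ) + 1) (n + 1)))


lemma cramer_aux (m : ℕ) (A : Matrix (Fin m) (Fin (m+1)) ℝ) (j : Fin m) :
    ∑ k : Fin (m+1), (-1:ℝ)^(k:ℕ) * (A.submatrix id k.succAbove).det * A j k = 0 := by
  have hB : (Matrix.of (Fin.cons (A j) A) : Matrix (Fin (m+1)) (Fin (m+1)) ℝ).det = 0 := by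
    apply Matrix.det_zero_of_row_eq (i := (0 : Fin (m+1))) (j := j.succ) (Fin.succ_ne_zero j).symm
    show (Fin.cons (A j) A : Fin (m+1) → Fin (m+1) → ℝ) 0 = (Fin.cons (A j) A : Fin (m+1) → Fin (m+1) → ℝ) j.succ
    rfl
  rw [Matrix.det_succ_row_zero] at hB
  rw [← hB]
  apply Finset.sum_congr rfl
  intro k _
  have h1 : (Matrix.of (Fin.cons (A j) A) : Matrix (Fin (m+1)) (Fin (m+1)) ℝ).submatrix Fin.succ k.succAbove
      = A.submatrix id k.succAbove := by
    ext r c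
    show (Fin.cons (A j) A : Fin (m+1) → Fin (m+1) → ℝ) r.succ _ = _
    rfl
  have h2 : (Matrix.of (Fin.cons (A j) A) : Matrix (Fin (m+1)) (Fin (m+1)) ℝ) 0 k = A j k := by
    show (Fin.cons (A j) A : Fin (m+1) → Fin (m+1) → ℝ) 0 k = A j k
    rfl
  rw [h1, h2]; ring

noncomputable def Tmat (q : ℕ) (d : ℝ) : Matrix (Fin (q+1)) (Fin (q+1)) ℝ :=
  Matrix.of fun a k => Fin.cases (if a = 0 then (1:ℝ) else 0)
    (fun k' => (if a = k'.succ then 1 else 0) + (if a = k'.castSucc then d else 0)) k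

lemma Tmat_det (q : ℕ) (d : ℝ) : (Tmat q d).det = 1 := by
  rw [Matrix.det_of_upperTriangular]
  · apply Finset.prod_eq_one
    intro a _
    induction a using Fin.cases with
    | zero => simp [Tmat]
    | succ a' =>
      show (if a'.succ = a'.succ then (1:ℝ) else 0) + (if a'.succ = a'.castSucc then d else 0) = 1
      rw [if_pos rfl, if_neg (by exact (Fin.castSucc_lt_succ (i := a')).ne')]
      ring
  · intro i j hij
    induction j using Fin.cases with
    | zero =>
      show (if i = 0 then (1:ℝ) else 0) = 0
      exact if_neg (by rintro rfl; exact absurd hij (lt_irrefl _))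
    | succ j' =>
      show (if i = j'.succ then (1:ℝ) else 0) + (if i = j'.castSucc then d else 0) = 0
      rw [if_neg, if_neg]
      · ring
      · rintro rfl; exact absurd ((Fin.castSucc_lt_succ (i := j')).trans hij) (lt_irrefl _)
      · rintro rfl; exact absurd hij (lt_irrefl _)

lemma mul_Tmat (q : ℕ) (d : ℝ) (H : Matrix (Fin (q+1)) (Fin (q+1)) ℝ) :
    H * Tmat q d = Matrix.of fun r c =>
      Fin.cases (H r 0) (fun c' => H r c'.succ + d * H r c'.castSucc) c := by
  ext r k
  rw [Matrix.mul_apply]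
  induction k using Fin.cases with
  | zero =>
    show (∑ a, H r a * (if a = 0 then (1:ℝ) else 0)) = H r 0
    simp [mul_ite]
  | succ k' =>
    show (∑ a, H r a * ((if a = k'.succ then (1:ℝ) else 0) + (if a = k'.castSucc then d else 0)))
      = H r k'.succ + d * H r k'.castSucc
    simp only [mul_add, Finset.sum_add_distrib, mul_ite, mul_one, mul_zero]
    rw [Finset.sum_ite_eq' Finset.univ k'.succ (fun a => H r a),
      Finset.sum_ite_eq' Finset.univ k'.castSucc (fun a => H r a * d)]
    simp [mul_comm]

lemma colred (q : ℕ) (H : Matrix (Fin (q+1)) (Fin (q+1)) ℝ) (d : ℝ) :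
    (Matrix.of fun r c =>
      Fin.cases (H r 0) (fun c' => H r c'.succ + d * H r c'.castSucc) c).det = H.det := by
  rw [← mul_Tmat q d H, Matrix.det_mul, Tmat_det, mul_one]

noncomputable def Tmat3 (q : ℕ) (d : ℝ) : Matrix (Fin (q+2)) (Fin (q+2)) ℝ :=
  Matrix.of fun a k => Fin.cases (if a = 1 then (1:ℝ) else 0)
    (fun k' => (if a = k'.succ then 1 else 0) + (if a = k'.castSucc then d else 0)) k

lemma sa1_zero (q : ℕ) : (1 : Fin (q+2)).succAbove 0 = 0 := by
  rw [Fin.succAbove_of_castSucc_lt]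
  · rfl
  · show ((0:Fin (q+1)).castSucc : Fin (q+2)) < 1
    simp [Fin.lt_def]

lemma sa1_succ (q : ℕ) (a : Fin q) : (1 : Fin (q+2)).succAbove a.succ = (a.succ).succ := by
  rw [Fin.succAbove_of_le_castSucc]
  simp [Fin.le_def]

lemma Tmat3_det (q : ℕ) (d : ℝ) : (Tmat3 q d).det = -d := by
  rw [Matrix.det_succ_column_zero]
  rw [Finset.sum_eq_single (1 : Fin (q+2))]
  · have h10 : (Tmat3 q d) 1 0 = 1 := by
      show (if (1 : Fin (q+2)) = 1 then (1:ℝ) else 0) = 1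
      simp
    rw [h10]
    have hS : ((Tmat3 q d).submatrix (1 : Fin (q+2)).succAbove Fin.succ).det = d := by
      rw [Matrix.det_of_upperTriangular]
      · rw [Finset.prod_eq_single (0 : Fin (q+1))]
        · show (if (1 : Fin (q+2)).succAbove 0 = Fin.succ 0 then (1:ℝ) else 0)
            + (if (1 : Fin (q+2)).succAbove 0 = Fin.castSucc 0 then d else 0) = d
          rw [sa1_zero, if_neg (Fin.succ_ne_zero 0).symm, if_pos (by simp)]
          ring
        · intro a _ ha
          induction a using Fin.cases with
          | zero => exact absurd rfl ha
          | succ a' =>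
            show (if (1 : Fin (q+2)).succAbove a'.succ = Fin.succ a'.succ then (1:ℝ) else 0)
              + (if (1 : Fin (q+2)).succAbove a'.succ = Fin.castSucc a'.succ then d else 0) = 1
            rw [sa1_succ, if_pos rfl, if_neg (by exact (Fin.castSucc_lt_succ (i := a'.succ)).ne')]
            ring
        · simp
      · intro a b hba
        have ha0 : a ≠ 0 := by rintro rfl; exact absurd hba (by simp [Fin.lt_def])
        obtain ⟨a', rfl⟩ := Fin.exists_succ_eq.mpr (by simpa using ha0)
        show (if (1 : Fin (q+2)).succAbove a'.succ = Fin.succ b then (1:ℝ) else 0)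
          + (if (1 : Fin (q+2)).succAbove a'.succ = Fin.castSucc b then d else 0) = 0
        rw [sa1_succ, if_neg, if_neg]
        · ring
        · intro h
          have := congrArg Fin.val h
          simp [Fin.lt_def] at this hba
          omega
        · intro h
          have := congrArg Fin.val h
          simp [Fin.lt_def] at this hba
          omega
    rw [hS]
    show (-1:ℝ)^((1 : Fin (q+2)) : ℕ) * 1 * d = -d
    simp
  · intro r _ hr
    have : (Tmat3 q d) r 0 = 0 := by
      show (if r = 1 then (1:ℝ) else 0) = 0
      exact if_neg hr
    rw [this]; ring
  · simp

lemma mul_Tmat3 (q : ℕ) (d : ℝ) (H : Matrix (Fin (q+2)) (Fin (q+2)) ℝ) :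
    H * Tmat3 q d = Matrix.of fun r c =>
      Fin.cases (H r 1) (fun c' => H r c'.succ + d * H r c'.castSucc) c := by
  ext r k
  rw [Matrix.mul_apply]
  induction k using Fin.cases with
  | zero =>
    show (∑ a, H r a * (if a = 1 then (1:ℝ) else 0)) = H r 1
    simp [mul_ite]
  | succ k' =>
    show (∑ a, H r a * ((if a = k'.succ then (1:ℝ) else 0) + (if a = k'.castSucc then d else 0)))
      = H r k'.succ + d * H r k'.castSucc
    simp only [mul_add, Finset.sum_add_distrib, mul_ite, mul_one, mul_zero]
    rw [Finset.sum_ite_eq' Finset.univ k'.succ (fun a => H r a),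
      Finset.sum_ite_eq' Finset.univ k'.castSucc (fun a => H r a * d)]
    simp [mul_comm]

lemma colred3 (q : ℕ) (H : Matrix (Fin (q+2)) (Fin (q+2)) ℝ) (d : ℝ) :
    (Matrix.of fun r c =>
      Fin.cases (H r 1) (fun c' => H r c'.succ + d * H r c'.castSucc) c).det = -d * H.det := by
  rw [← mul_Tmat3 q d H, Matrix.det_mul, Tmat3_det]
  ring

lemma colrot (q : ℕ) (B : Matrix (Fin (q+1)) (Fin (q+1)) ℝ) :
    (Matrix.of fun r c =>
      Fin.cases (B r (Fin.last q)) (fun c' => B r c'.castSucc) c).det = (-1:ℝ)^q * B.det := by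
  have h1 : (finRotate (q+1))⁻¹ 0 = Fin.last q := by
    apply (finRotate (q+1)).injective
    simp [finRotate_succ_apply, Fin.last_add_one]
  have h2 : ∀ c' : Fin q, (finRotate (q+1))⁻¹ c'.succ = c'.castSucc := by
    intro c'
    apply (finRotate (q+1)).injective
    simp [finRotate_succ_apply, Fin.coeSucc_eq_succ]
  have hM : (Matrix.of fun r c =>
      Fin.cases (B r (Fin.last q)) (fun c' => B r c'.castSucc) c)
      = B.submatrix id ((finRotate (q+1))⁻¹ : Equiv.Perm (Fin (q+1))) := by
    ext r c
    induction c using Fin.cases with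
    | zero => show B r (Fin.last q) = B r ((finRotate (q+1))⁻¹ 0); rw [h1]
    | succ c' => show B r c'.castSucc = B r ((finRotate (q+1))⁻¹ c'.succ); rw [h2]
  rw [hM, Matrix.det_permute']
  congr 1
  have : Equiv.Perm.sign ((finRotate (q+1))⁻¹) = Equiv.Perm.sign (finRotate (q+1)) := by
    simp
  rw [this, sign_finRotate]
  simp

noncomputable def Hk (p : ℕ) (f : ℕ → ℝ) (t : ℕ) : ℝ :=
  (Matrix.of fun j k : Fin p => f (j.1 + k.1 + t)).det

noncomputable def Amat (μ ν : ℕ → ℝ) (m : ℕ) : Matrix (Fin (m+2)) (Fin (m+3)) ℝ :=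
  Matrix.of fun j k => Fin.cases (μ (j.1+1)) (fun k' => ν (j.1 + k'.1)) k

@[simp] lemma Amat_zero (μ ν : ℕ → ℝ) (m : ℕ) (j : Fin (m+2)) :
    Amat μ ν m j 0 = μ (j.1+1) := rfl
@[simp] lemma Amat_succ (μ ν : ℕ → ℝ) (m : ℕ) (j : Fin (m+2)) (k' : Fin (m+2)) :
    Amat μ ν m j k'.succ = ν (j.1 + k'.1) := by
  simp [Amat]

noncomputable def M0mat (ν : ℕ → ℝ) (m : ℕ) : Matrix (Fin (m+1)) (Fin (m+1)) ℝ :=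
  Matrix.of fun r c => Fin.cases (0:ℝ) (fun c' => ν (r.1 + c'.1 + 1)) c

@[simp] lemma M0mat_succ (ν : ℕ → ℝ) (m : ℕ) (r : Fin (m+1)) (c' : Fin m) :
    M0mat ν m r c'.succ = ν (r.1 + c'.1 + 1) := by
  simp [M0mat]

lemma det_updateColumn_sum'' {p : ℕ} (M : Matrix (Fin p) (Fin p) ℝ) (j : Fin p)
    {κ : Type*} [DecidableEq κ] (s : Finset κ) (f : κ → Fin p → ℝ) :
    ∑ k ∈ s, (M.updateCol j (f k)).det
      = (M.updateCol j (fun r => ∑ k ∈ s, f k r)).det := by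
  induction s using Finset.induction with
  | empty =>
    rw [Finset.sum_empty]
    symm
    apply Matrix.det_eq_zero_of_column_eq_zero j
    intro i
    rw [Matrix.updateCol_self]
    simp
  | @insert a s' hnotmem ih =>
    rw [Finset.sum_insert hnotmem, ih]
    have : (fun r => ∑ k ∈ insert a s', f k r) = (f a + fun r => ∑ k ∈ s', f k r) := by
      funext r
      simp [Finset.sum_insert hnotmem]
    rw [this, Matrix.det_updateCol_add]

lemma bilinear (μ : ℕ → ℝ) (d : ℝ) (i : ℕ) (hi : 1 ≤ i) :
    Hk i (fun m => μ (m+1) + d * μ m) 0 * Hk (i-1) μ 1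
      - Hk (i-1) (fun m => μ (m+1) + d * μ m) 0 * Hk i μ 1
      = d * Hk i μ 0 * Hk (i-1) (fun m => μ (m+1) + d * μ m) 1 := by
  set ν : ℕ → ℝ := fun m => μ (m+1) + d * μ m with hν
  match i, hi with
  | 1, _ =>
    have h0 : ∀ f t, Hk 0 f t = 1 := by intro f t; exact Matrix.det_fin_zero
    have h1 : ∀ (f : ℕ → ℝ) t, Hk 1 f t = f t := by
      intro f t; rw [Hk, Matrix.det_fin_one]; norm_num
    simp only [Nat.sub_self, h0, h1]
    show ν 0 * 1 - 1 * μ 1 = d * μ 0 * 1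
    simp only [hν]
    ring
  | (m+2), _ =>
    set A := Amat μ ν m with hA
    set X : Fin (m+3) → ℝ := fun k => (A.submatrix id k.succAbove).det with hX
    set G : (Fin (m+1) → ℝ) → ℝ := fun v => ((M0mat ν m).updateCol 0 v).det with hG
    -- the Plücker sum
    have hsum : ∑ k : Fin (m+3), ((-1:ℝ)^(k:ℕ) * X k) * G (fun r => A r.castSucc k) = 0 := by
      have e1 : ∀ k : Fin (m+3), ((-1:ℝ)^(k:ℕ) * X k) * G (fun r => A r.castSucc k)
          = ((M0mat ν m).updateCol 0 (((-1:ℝ)^(k:ℕ) * X k) • fun r => A r.castSucc k)).det := by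
        intro k
        rw [Matrix.det_updateCol_smul]
      calc ∑ k : Fin (m+3), ((-1:ℝ)^(k:ℕ) * X k) * G (fun r => A r.castSucc k)
          = ∑ k : Fin (m+3), ((M0mat ν m).updateCol 0
              (((-1:ℝ)^(k:ℕ) * X k) • fun r => A r.castSucc k)).det := by
            exact Finset.sum_congr rfl fun k _ => e1 k
        _ = ((M0mat ν m).updateCol 0
              (fun r => ∑ k : Fin (m+3), ((-1:ℝ)^(k:ℕ) * X k) * A r.castSucc k)).det := by
            rw [det_updateColumn_sum'']
            rfl
        _ = 0 := by
            apply Matrix.det_eq_zero_of_column_eq_zero 0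
            intro r
            rw [Matrix.updateCol_self]
            exact cramer_aux (m+2) A r.castSucc
    -- middle terms vanish
    have hvanish : ∀ k ∈ (Finset.univ : Finset (Fin (m+3))),
        k ∉ ({0, 1, Fin.last (m+2)} : Finset (Fin (m+3))) →
        ((-1:ℝ)^(k:ℕ) * X k) * G (fun r => A r.castSucc k) = 0 := by
      intro k _ hk
      simp only [Finset.mem_insert, Finset.mem_singleton] at hk
      push_neg at hk
      obtain ⟨hk0, hk1, hkl⟩ := hk
      obtain ⟨k', rfl⟩ : ∃ k' : Fin (m+2), k'.succ = k := by
        rcases Fin.eq_zero_or_eq_succ k with h | ⟨k', rfl⟩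
        · exact absurd h hk0
        · exact ⟨k', rfl⟩
      have hk'1 : 1 ≤ k'.1 := by
        rcases Nat.eq_zero_or_pos k'.1 with h | h
        · exact absurd (Fin.ext (by simp [Fin.val_succ, h])) hk1
        · exact h
      have hk'm : k'.1 ≤ m := by
        have h2 : k'.1 < m + 2 := k'.2
        rcases Nat.lt_or_ge k'.1 (m+1) with h | h
        · omega
        · exact absurd (Fin.ext (by simp [Fin.val_succ, Fin.val_last]; omega)) hkl
      have hzero : G (fun r => A r.castSucc k'.succ) = 0 := by
        apply Matrix.det_zero_of_column_eq
          (i := (0 : Fin (m+1))) (j := ((⟨k'.1 - 1, by omega⟩ : Fin m)).succ)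
        · exact (Fin.succ_ne_zero _).symm
        · intro r
          rw [Matrix.updateCol_apply, Matrix.updateCol_apply,
            if_pos rfl, if_neg (Fin.succ_ne_zero _)]
          rw [hA, Amat_succ, M0mat_succ]
          congr 1
          simp only [Fin.coe_castSucc]
          omega
      rw [hzero]; ring
    have hsum3 : ∑ k ∈ ({0, 1, Fin.last (m+2)} : Finset (Fin (m+3))),
        ((-1:ℝ)^(k:ℕ) * X k) * G (fun r => A r.castSucc k) = 0 :=
      (Finset.sum_subset (Finset.subset_univ _) hvanish).trans hsum
    have h01 : (0 : Fin (m+3)) ≠ 1 := by simp [Fin.ext_iff]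
    have h0l : (0 : Fin (m+3)) ≠ Fin.last (m+2) := by simp [Fin.ext_iff]
    have h1l : (1 : Fin (m+3)) ≠ Fin.last (m+2) := by simp [Fin.ext_iff]
    rw [Finset.sum_insert (by simp [h01, h0l]), Finset.sum_insert (by simp [h1l]),
      Finset.sum_singleton] at hsum3
    -- evaluations
    have hX0 : X 0 = Hk (m+2) ν 0 := by
      show (A.submatrix id (0 : Fin (m+3)).succAbove).det = _
      have hEq : A.submatrix id (0 : Fin (m+3)).succAbove
          = Matrix.of fun j k : Fin (m+2) => ν (j.1+k.1+0) := by
        ext j k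
        rw [Matrix.submatrix_apply, id_eq, Fin.zero_succAbove, hA, Amat_succ]
        rfl
      rw [hEq, Hk]
    have hG0 : G (fun r => A r.castSucc 0) = Hk (m+1) μ 1 := by
      show ((M0mat ν m).updateCol 0 (fun r => A r.castSucc 0)).det = _
      have hEq : ((M0mat ν m).updateCol 0 (fun r => A r.castSucc 0))
          = Matrix.of fun r c => Fin.cases
              ((Matrix.of fun a b : Fin (m+1) => μ (a.1+b.1+1)) r 0)
              (fun c' => (Matrix.of fun a b : Fin (m+1) => μ (a.1+b.1+1)) r c'.succ
                + d * (Matrix.of fun a b : Fin (m+1) => μ (a.1+b.1+1)) r c'.castSucc) c := by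
        ext r c
        induction c using Fin.cases with
        | zero =>
          rw [Matrix.updateCol_apply, if_pos rfl, hA, Amat_zero]
          show μ (r.castSucc.1 + 1) = μ (r.1 + 0 + 1)
          congr 1
          all_goals simp
        | succ c' =>
          rw [Matrix.updateCol_apply, if_neg (Fin.succ_ne_zero _), M0mat_succ]
          show ν (r.1 + c'.1 + 1) = μ (r.1 + c'.succ.1 + 1) + d * μ (r.1 + c'.castSucc.1 + 1)
          rw [hν]
          simp only [Fin.val_succ, Fin.coe_castSucc]
          all_goals (congr 2 <;> omega)
      rw [hEq, colred m (Matrix.of fun a b : Fin (m+1) => μ (a.1+b.1+1)) d, Hk]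
    have hX1 : X 1 = Hk (m+2) μ 1 := by
      show (A.submatrix id (1 : Fin (m+3)).succAbove).det = _
      have hEq : A.submatrix id (1 : Fin (m+3)).succAbove
          = Matrix.of fun r c => Fin.cases
              ((Matrix.of fun a b : Fin (m+2) => μ (a.1+b.1+1)) r 0)
              (fun c' => (Matrix.of fun a b : Fin (m+2) => μ (a.1+b.1+1)) r c'.succ
                + d * (Matrix.of fun a b : Fin (m+2) => μ (a.1+b.1+1)) r c'.castSucc) c := by
        ext r c
        induction c using Fin.cases with
        | zero =>
          rw [Matrix.submatrix_apply, id_eq, sa1_zero (m+1), hA, Amat_zero]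
          show μ (r.1 + 1) = μ (r.1 + 0 + 1)
          congr 1
        | succ c' =>
          rw [Matrix.submatrix_apply, id_eq, sa1_succ (m+1) c', hA, Amat_succ]
          show ν (r.1 + c'.succ.1) = μ (r.1 + c'.succ.1 + 1) + d * μ (r.1 + c'.castSucc.1 + 1)
          rw [hν]
          simp only [Fin.val_succ, Fin.coe_castSucc]
          all_goals (congr 2 <;> omega)
      rw [hEq, colred (m+1) (Matrix.of fun a b : Fin (m+2) => μ (a.1+b.1+1)) d, Hk]
    have hG1 : G (fun r => A r.castSucc 1) = Hk (m+1) ν 0 := by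
      show ((M0mat ν m).updateCol 0 (fun r => A r.castSucc 1)).det = _
      rw [Hk]
      congr 1
      ext r c
      induction c using Fin.cases with
      | zero =>
        rw [Matrix.updateCol_apply, if_pos rfl]
        have h1 : (1 : Fin (m+3)) = (0 : Fin (m+2)).succ := by
          apply Fin.ext; simp
        rw [hA, h1, Amat_succ]
        show ν (r.castSucc.1 + (0:Fin (m+2)).1) = ν (r.1 + (0:Fin (m+1)).1 + 0)
        congr 1
        all_goals simp
      | succ c' =>
        rw [Matrix.updateCol_apply, if_neg (Fin.succ_ne_zero _), M0mat_succ]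
        show ν (r.1 + c'.1 + 1) = ν (r.1 + c'.succ.1 + 0)
        congr 1
        all_goals (simp only [Fin.val_succ]; omega)
    have hXl : X (Fin.last (m+2)) = -d * Hk (m+2) μ 0 := by
      show (A.submatrix id (Fin.last (m+2)).succAbove).det = _
      have hEq : A.submatrix id (Fin.last (m+2)).succAbove
          = Matrix.of fun r c => Fin.cases
              ((Matrix.of fun a b : Fin (m+2) => μ (a.1+b.1+0)) r 1)
              (fun c' => (Matrix.of fun a b : Fin (m+2) => μ (a.1+b.1+0)) r c'.succ
                + d * (Matrix.of fun a b : Fin (m+2) => μ (a.1+b.1+0)) r c'.castSucc) c := by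
        ext r c
        induction c using Fin.cases with
        | zero =>
          rw [Matrix.submatrix_apply, id_eq, Fin.succAbove_last, hA]
          show (Amat μ ν m) r (Fin.castSucc 0) = μ (r.1 + (1:Fin (m+2)).1 + 0)
          have h0 : (Fin.castSucc (0 : Fin (m+2))) = (0 : Fin (m+3)) := by
            apply Fin.ext; simp
          rw [h0, Amat_zero]
          congr 1
          all_goals simp [Fin.val_one]
        | succ c' =>
          rw [Matrix.submatrix_apply, id_eq, Fin.succAbove_last, hA, ← Fin.succ_castSucc,
            Amat_succ]
          show μ (r.1 + c'.castSucc.1 + 1) + d * μ (r.1 + c'.castSucc.1)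
            = μ (r.1 + c'.succ.1 + 0) + d * μ (r.1 + c'.castSucc.1 + 0)
          simp only [Fin.val_succ, Fin.coe_castSucc]
          all_goals (congr 2 <;> omega)
      rw [hEq, colred3 m (Matrix.of fun a b : Fin (m+2) => μ (a.1+b.1+0)) d, Hk]
    have hGl : G (fun r => A r.castSucc (Fin.last (m+2)))
        = (-1:ℝ)^m * Hk (m+1) ν 1 := by
      show ((M0mat ν m).updateCol 0 (fun r => A r.castSucc (Fin.last (m+2)))).det = _
      have hEq : ((M0mat ν m).updateCol 0 (fun r => A r.castSucc (Fin.last (m+2))))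
          = Matrix.of fun r c => Fin.cases
              ((Matrix.of fun a b : Fin (m+1) => ν (a.1+b.1+1)) r (Fin.last m))
              (fun c' => (Matrix.of fun a b : Fin (m+1) => ν (a.1+b.1+1)) r c'.castSucc) c := by
        ext r c
        induction c using Fin.cases with
        | zero =>
          rw [Matrix.updateCol_apply, if_pos rfl]
          have hl : (Fin.last (m+2)) = (Fin.last (m+1)).succ := (Fin.succ_last (m+1)).symm
          rw [hA, hl, Amat_succ]
          show ν (r.castSucc.1 + (Fin.last (m+1)).1) = ν (r.1 + (Fin.last m).1 + 1)
          congr 1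
          all_goals simp [Fin.val_last]
        | succ c' =>
          rw [Matrix.updateCol_apply, if_neg (Fin.succ_ne_zero _), M0mat_succ]
          show ν (r.1 + c'.1 + 1) = ν (r.1 + c'.castSucc.1 + 1)
          congr 1
      rw [hEq, colrot m (Matrix.of fun a b : Fin (m+1) => ν (a.1+b.1+1)), Hk]
    rw [hX0, hG0, hX1, hG1, hXl, hGl] at hsum3
    have hc0 : (((0 : Fin (m+3))) : ℕ) = 0 := rfl
    have hc1 : (((1 : Fin (m+3))) : ℕ) = 1 := rfl
    have hcl : ((Fin.last (m+2)) : ℕ) = m+2 := rfl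
    rw [hc0, hc1, hcl] at hsum3
    have h21 : m + 2 - 1 = m + 1 := by omega
    rw [h21]
    have he : (-1:ℝ)^m * (-1:ℝ)^m = 1 := by
      rw [← pow_add]
      exact Even.neg_one_pow ⟨m, rfl⟩
    linear_combination hsum3 + d * Hk (m+2) μ 0 * Hk (m+1) ν 1 * he


lemma tau_pos (N : ℕ) (lam c : ℕ → ℝ) (δ : ℕ → ℝ)
    (hlampos : ∀ j ∈ Finset.Icc 1 N, 0 < lam j)
    (hdist : ∀ j ∈ Finset.Icc 1 N, ∀ k ∈ Finset.Icc 1 N, j ≠ k → lam j ≠ lam k)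
    (hcpos : ∀ j ∈ Finset.Icc 1 N, 0 < c j)
    (hδmin : ∀ n : ℕ, ∀ j ∈ Finset.Icc 1 N, -lam j < δ n)
    (i : ℕ) (hiN : i ≤ N) (s : ℤ) (n : ℕ) :
    0 < tauH N lam c δ i s n := by
  rcases Nat.eq_zero_or_pos i with rfl | hi
  · rw [tauH, Matrix.det_fin_zero]; norm_num
  set a : ℕ → ℝ := fun r => c r * lam r ^ s * ∏ l ∈ Finset.range n, (lam r + δ l) with ha
  have hapos : ∀ r ∈ Finset.Icc 1 N, 0 < a r := by
    intro r hr
    apply mul_pos (mul_pos (hcpos r hr) (zpow_pos (hlampos r hr) s))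
    apply Finset.prod_pos
    intro l _
    have := hδmin l r hr
    linarith
  have hmom : ∀ m : ℕ, mom N lam c δ m s n = ∑ r ∈ Finset.Icc 1 N, a r * lam r ^ m := by
    intro m
    rw [mom]
    apply Finset.sum_congr rfl
    intro r hr
    have hne : lam r ≠ 0 := (hlampos r hr).ne'
    rw [zpow_add₀ hne, zpow_natCast]
    ring
  set M : Matrix (Fin i) (Fin i) ℝ :=
    Matrix.of fun j k : Fin i => mom N lam c δ (j.1 + k.1) s n with hM
  have hquad : ∀ x : Fin i → ℝ,
      dotProduct x (M.mulVec x)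
        = ∑ r ∈ Finset.Icc 1 N, a r * (∑ j, x j * lam r ^ (j:ℕ))^2 := by
    intro x
    have h1 : dotProduct x (M.mulVec x)
        = ∑ j, ∑ k, ∑ r ∈ Finset.Icc 1 N,
            a r * (x j * lam r ^ (j:ℕ)) * (x k * lam r ^ (k:ℕ)) := by
      rw [dotProduct]
      apply Finset.sum_congr rfl
      intro j _
      rw [Matrix.mulVec, dotProduct, Finset.mul_sum]
      apply Finset.sum_congr rfl
      intro k _
      have hMjk : M j k = ∑ r ∈ Finset.Icc 1 N, a r * lam r ^ ((j:ℕ) + (k:ℕ)) := by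
        rw [hM]; exact hmom _
      rw [hMjk, Finset.sum_mul, Finset.mul_sum]
      apply Finset.sum_congr rfl
      intro r _
      rw [pow_add]
      ring
    rw [h1]
    have h2 : ∑ j, ∑ k, ∑ r ∈ Finset.Icc 1 N,
          a r * (x j * lam r ^ (j:ℕ)) * (x k * lam r ^ (k:ℕ))
        = ∑ r ∈ Finset.Icc 1 N, ∑ j, ∑ k,
          a r * (x j * lam r ^ (j:ℕ)) * (x k * lam r ^ (k:ℕ)) := by
      rw [Finset.sum_congr rfl (fun j _ => Finset.sum_comm)]
      exact Finset.sum_comm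
    rw [h2]
    apply Finset.sum_congr rfl
    intro r _
    simp only [sq, Finset.sum_mul, Finset.mul_sum]
    apply Finset.sum_congr rfl
    intro j _
    apply Finset.sum_congr rfl
    intro k _
    ring
  have hherm : M.IsHermitian := by
    rw [Matrix.IsHermitian]
    ext j k
    rw [Matrix.conjTranspose_apply, hM]
    show star (mom N lam c δ (k.1+j.1) s n) = mom N lam c δ (j.1+k.1) s n
    rw [star_trivial]
    congr 1
    omega
  have hkey : ∀ x : Fin i → ℝ, x ≠ 0 →
      ∃ r ∈ Finset.Icc 1 N, (∑ j, x j * lam r ^ (j:ℕ)) ≠ 0 := by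
    intro x hx
    by_contra hcon
    push_neg at hcon
    apply hx
    set P : Polynomial ℝ := ∑ j : Fin i, Polynomial.C (x j) * Polynomial.X ^ (j:ℕ) with hP
    have hcoeff : ∀ j : Fin i, P.coeff j.1 = x j := by
      intro j
      rw [hP, Polynomial.finset_sum_coeff]
      rw [Finset.sum_eq_single j]
      · simp [Polynomial.coeff_C_mul, Polynomial.coeff_X_pow]
      · intro b _ hbj
        rw [Polynomial.coeff_C_mul, Polynomial.coeff_X_pow, if_neg, mul_zero]
        intro h
        exact hbj (Fin.val_injective h.symm)
      · intro h
        exact absurd (Finset.mem_univ j) h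
    have hdeg : P.natDegree < N := by
      have hle : P.natDegree ≤ i - 1 := by
        apply Polynomial.natDegree_sum_le_of_forall_le
        intro j _
        apply le_trans (Polynomial.natDegree_C_mul_le _ _)
        rw [Polynomial.natDegree_X_pow]
        omega
      omega
    have hzero : P = 0 := by
      apply Polynomial.eq_zero_of_natDegree_lt_card_of_eval_eq_zero' P
        ((Finset.Icc 1 N).image lam)
      · intro y hy
        rw [Finset.mem_image] at hy
        obtain ⟨r, hr, rfl⟩ := hy
        have hc := hcon r hr
        rw [hP, Polynomial.eval_finset_sum]
        simpa using hc
      · rw [Finset.card_image_of_injOn]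
        · rw [Nat.card_Icc]
          omega
        · intro p hp q hq hpq
          by_contra hne
          exact hdist p hp q hq hne hpq
    funext j
    have hcj := hcoeff j
    rw [hzero] at hcj
    simpa using hcj.symm
  have hpd : M.PosDef := by
    rw [Matrix.posDef_iff_dotProduct_mulVec]
    constructor
    · exact hherm
    · intro x hx
      have hsx : star x = x := by funext j; simp
      rw [hsx, hquad x]
      obtain ⟨r, hr, hne⟩ := hkey x hx
      apply Finset.sum_pos'
      · intro t ht
        have h0 := (hapos t ht).le
        positivity
      · exact ⟨r, hr, mul_pos (hapos r hr) (pow_two_pos_of_ne_zero hne)⟩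
  have hdet := hpd.det_pos
  rw [tauH]
  exact hdet


lemma mom_shift (N : ℕ) (lam c : ℕ → ℝ) (δ : ℕ → ℝ) (m : ℕ) (s : ℤ) (n : ℕ) :
    mom N lam c δ m (s+1) n = mom N lam c δ (m+1) s n := by
  rw [mom, mom]
  apply Finset.sum_congr rfl
  intro j _
  congr 2
  push_cast
  ring

lemma mom_step (N : ℕ) (lam c : ℕ → ℝ) (δ : ℕ → ℝ)
    (hlampos : ∀ j ∈ Finset.Icc 1 N, 0 < lam j) (m : ℕ) (s : ℤ) (n : ℕ) :
    mom N lam c δ m s (n+1) = mom N lam c δ (m+1) s n + δ n * mom N lam c δ m s n := by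
  rw [mom, mom, mom, Finset.mul_sum, ← Finset.sum_add_distrib]
  apply Finset.sum_congr rfl
  intro j hj
  rw [Finset.prod_range_succ]
  have hcast : ((m+1 : ℕ) : ℤ) + s = ((m:ℕ) : ℤ) + s + 1 := by push_cast; ring
  rw [hcast, zpow_add_one₀ (hlampos j hj).ne']
  ring

lemma tau_bilinear (N : ℕ) (lam c : ℕ → ℝ) (δ : ℕ → ℝ)
    (hlampos : ∀ j ∈ Finset.Icc 1 N, 0 < lam j) (n : ℕ) (i : ℕ) (hi : 1 ≤ i) (s : ℤ) :
    tauH N lam c δ i s (n+1) * tauH N lam c δ (i-1) (s+1) n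
      - tauH N lam c δ (i-1) s (n+1) * tauH N lam c δ i (s+1) n
      = δ n * tauH N lam c δ i s n * tauH N lam c δ (i-1) (s+1) (n+1) := by
  set μf : ℕ → ℝ := fun m => mom N lam c δ m s n with hμf
  have hstep : ∀ m, mom N lam c δ m s (n+1) = μf (m+1) + δ n * μf m := by
    intro m; exact mom_step N lam c δ hlampos m s n
  have e1 : ∀ p : ℕ, tauH N lam c δ p s (n+1) = Hk p (fun m => μf (m+1) + δ n * μf m) 0 := by
    intro p
    rw [tauH, Hk]
    congr 1
    ext j k
    exact hstep _
  have e3 : ∀ p : ℕ, tauH N lam c δ p (s+1) n = Hk p μf 1 := by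
    intro p
    rw [tauH, Hk]
    congr 1
    ext j k
    exact mom_shift N lam c δ _ s n
  have e5 : tauH N lam c δ i s n = Hk i μf 0 := rfl
  have e6 : tauH N lam c δ (i-1) (s+1) (n+1) = Hk (i-1) (fun m => μf (m+1) + δ n * μf m) 1 := by
    rw [tauH, Hk]
    congr 1
    ext j k
    show mom N lam c δ (j.1 + k.1) (s+1) (n+1) = μf (j.1+k.1+1+1) + δ n * μf (j.1+k.1+1)
    rw [mom_shift N lam c δ _ s (n+1)]
    exact hstep _
  rw [e1, e1, e3, e3, e5, e6]
  exact bilinear μf (δ n) i hi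

theorem stmt17 (N : ℕ) (hN : 1 ≤ N) (lam c : ℕ → ℝ) (δ : ℕ → ℝ)
    (hlampos : ∀ j ∈ Finset.Icc 1 N, 0 < lam j)
    (hdist : ∀ j ∈ Finset.Icc 1 N, ∀ k ∈ Finset.Icc 1 N, j ≠ k → lam j ≠ lam k)
    (hcpos : ∀ j ∈ Finset.Icc 1 N, 0 < c j)
    (hδne : ∀ n : ℕ, δ n ≠ 0)
    (hδmin : ∀ n : ℕ, ∀ j ∈ Finset.Icc 1 N, -lam j < δ n) :
    (∀ (n : ℕ) (i : ℕ), 1 ≤ i → i ≤ N →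
      pn N lam c δ i n
        = tauH N lam c δ i (-(n : ℤ)) n * tauH N lam c δ (i - 1) (-(n : ℤ) + 1) (n + 1) /
          (tauH N lam c δ (i - 1) (-(n : ℤ)) (n + 1) * tauH N lam c δ i (-(n : ℤ) + 1) n)) ∧
    (∀ (n : ℕ) (i : ℕ), 1 ≤ i → i ≤ N - 1 →
      Real.exp (xn N lam c δ (i + 1) n - xn N lam c δ i n)
        = pn N lam c δ i n * En N lam c δ i n /
          (pn N lam c δ (i + 1) n * Qn N lam c δ (i + 1) n)) := by
  have hpos : ∀ (a : ℕ), a ≤ N → ∀ (s : ℤ) (n : ℕ), 0 < tauH N lam c δ a s n :=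
    fun a haN s n => tau_pos N lam c δ hlampos hdist hcpos hδmin a haN s n
  have hA : ∀ (n : ℕ) (i : ℕ), 1 ≤ i → i ≤ N →
      pn N lam c δ i n
        = tauH N lam c δ i (-(n : ℤ)) n * tauH N lam c δ (i - 1) (-(n : ℤ) + 1) (n + 1) /
          (tauH N lam c δ (i - 1) (-(n : ℤ)) (n + 1) * tauH N lam c δ i (-(n : ℤ) + 1) n) := by
    intro n i h1 hiN
    have hbi := tau_bilinear N lam c δ hlampos n i h1 (-(n:ℤ))
    have P1 := hpos (i-1) (by omega) (-(n:ℤ)) n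
    have P2 := hpos i hiN (-(n:ℤ)) n
    have P3 := hpos (i-1) (by omega) (-(n:ℤ)+1) n
    have P4 := hpos i hiN (-(n:ℤ)+1) n
    have P5 := hpos (i-1) (by omega) (-(n:ℤ)) (n+1)
    have P6 := hpos i hiN (-(n:ℤ)) (n+1)
    have P7 := hpos (i-1) (by omega) (-(n:ℤ)+1) (n+1)
    have hd := hδne n
    rw [pn, Qn, Qbn]
    field_simp
    linear_combination hbi
  refine ⟨hA, ?_⟩
  intro n i h1 hiN1
  have hiN : i ≤ N := by omega
  have hi1N : i + 1 ≤ N := by omega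
  have Q1 := hpos (i-1) (by omega) (-(n:ℤ)) n
  have Q2 := hpos i hiN (-(n:ℤ)) n
  have Q3 := hpos (i+1) hi1N (-(n:ℤ)) n
  have Q4 := hpos (i-1) (by omega) (-(n:ℤ)+1) n
  have Q5 := hpos i hiN (-(n:ℤ)+1) n
  have Q6 := hpos (i+1) hi1N (-(n:ℤ)+1) n
  have Q7 := hpos (i-1) (by omega) (-(n:ℤ)) (n+1)
  have Q8 := hpos i hiN (-(n:ℤ)) (n+1)
  have Q9 := hpos (i-1) (by omega) (-(n:ℤ)+1) (n+1)
  have Q10 := hpos i hiN (-(n:ℤ)+1) (n+1)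
  have hz1 : 0 < tauH N lam c δ i (-(n : ℤ)) n * tauH N lam c δ (i - 1) (-(n : ℤ)) (n + 1) /
      (tauH N lam c δ (i - 1) (-(n : ℤ) + 1) n * tauH N lam c δ (i - 1) (-(n : ℤ) + 1) (n + 1)) :=
    div_pos (mul_pos Q2 Q7) (mul_pos Q4 Q9)
  have hz2 : 0 < tauH N lam c δ (i+1) (-(n : ℤ)) n * tauH N lam c δ (i+1- 1) (-(n : ℤ)) (n + 1) /
      (tauH N lam c δ (i+1-1) (-(n : ℤ) + 1) n *
        tauH N lam c δ (i+1-1) (-(n : ℤ) + 1) (n + 1)) := by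
    simp only [Nat.add_sub_cancel]
    exact div_pos (mul_pos Q3 Q8) (mul_pos Q5 Q10)
  rw [xn, xn, Real.exp_sub, Real.exp_log hz1, Real.exp_log hz2]
  rw [hA n i h1 hiN, hA n (i+1) (by omega) hi1N, En, Qn]
  simp only [Nat.add_sub_cancel]
  have n1 := Q1.ne'
  have n2 := Q2.ne'
  have n3 := Q3.ne'
  have n4 := Q4.ne'
  have n5 := Q5.ne'
  have n6 := Q6.ne'
  have n7 := Q7.ne'
  have n8 := Q8.ne'
  have n9 := Q9.ne'
  have n10 := Q10.ne'
  field_simp
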